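/- For an odd positive integer N and an integer l with |l| > 2 and l ≡ 2 (mod N), the map sending a matrix γ = [[1+aN, b],[cN, 1+dN]] in SL₂(ℤ) with trace l to the quadratic form q_γ = [cN, (d−a)N, −b] (i.e. cN·X² + (d−a)N·XY − b·Y²) is a bijection from the set Γ_{1,l}(N) of matrices in Γ₁(N) of trace l onto the set Q_l(N) of integral binary quadratic forms [aN, bN, c] of discriminant l² − 4. -/
import Mathlib


/-- For an odd positive integer `N` and an integer `l` with `|l| > 2` and
`l ≡ 2 (mod N)`, the map `γ = [[1+aN, b],[cN, 1+dN]] ↦ q_γ = [cN, (d−a)N, −b]` is a bijection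
from `Γ_{1,l}(N)` (matrices in `Γ₁(N)` of trace `l`) onto `Q_l(N)` (integral binary quadratic
forms `[aN, bN, c]` of discriminant `l² − 4`). -/
theorem gamma1l_bijOn_Ql (N : ℕ) (hN : Odd N) (hNpos : 0 < N) (l : ℤ)
    (hl : 2 < |l|) (hlN : (N : ℤ) ∣ (l - 2)) :
    Set.BijOn (fun γ : Matrix (Fin 2) (Fin 2) ℤ => (γ 1 0, γ 1 1 - γ 0 0, -γ 0 1))
      {γ : Matrix (Fin 2) (Fin 2) ℤ |
        γ.det = 1 ∧ (N : ℤ) ∣ (γ 0 0 - 1) ∧ (N : ℤ) ∣ (γ 1 1 - 1) ∧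
        (N : ℤ) ∣ γ 1 0 ∧ γ.trace = l}
      {q : ℤ × ℤ × ℤ |
        (N : ℤ) ∣ q.1 ∧ (N : ℤ) ∣ q.2.1 ∧ q.2.1 ^ 2 - 4 * q.1 * q.2.2 = l ^ 2 - 4} := by
  have hcop : IsCoprime (2 : ℤ) (N : ℤ) := by
    rw [Int.isCoprime_iff_gcd_eq_one]
    simpa [Int.gcd] using (Nat.coprime_two_left).mpr hN
  refine ⟨?_, ?_, ?_⟩
  · rintro γ ⟨hdet, ha, hd, hc, htr⟩
    have hdet' : γ 0 0 * γ 1 1 - γ 0 1 * γ 1 0 = 1 := by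
      rw [Matrix.det_fin_two] at hdet; exact hdet
    have htr' : γ 0 0 + γ 1 1 = l := by
      rw [Matrix.trace_fin_two] at htr; exact htr
    refine ⟨hc, ?_, ?_⟩
    · have := dvd_sub hd ha
      simpa using this
    · simp only
      linear_combination (γ 0 0 + γ 1 1 + l) * htr' - 4 * hdet'
  · rintro γ ⟨hdet, ha, hd, hc, htr⟩ δ ⟨hdet2, ha2, hd2, hc2, htr2⟩ heq
    simp only [Prod.mk.injEq] at heq
    obtain ⟨h1, h2, h3⟩ := heq
    rw [Matrix.trace_fin_two] at htr htr2
    have e00 : γ 0 0 = δ 0 0 := by omega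
    have e11 : γ 1 1 = δ 1 1 := by omega
    have e01 : γ 0 1 = δ 0 1 := by omega
    ext i j
    fin_cases i <;> fin_cases j <;> assumption
  · rintro ⟨A, B, C⟩ ⟨hA, hB, hdisc⟩
    simp only at hA hB hdisc
    have hprod : (l - B) * (l + B) = 4 - 4 * A * C := by linear_combination -hdisc
    have hpe : Even ((l - B) * (l + B)) := ⟨2 - 2 * A * C, by linear_combination hprod⟩
    have heven : Even (l - B) := by
      rcases Int.even_mul.mp hpe with h | h
      · exact h
      · obtain ⟨r, hr⟩ := h
        exact ⟨r - B, by omega⟩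
    obtain ⟨k, hk⟩ := heven
    have hk' : l - B = 2 * k := by omega
    have hkd : (N : ℤ) ∣ (k - 1) := by
      refine hcop.symm.dvd_of_dvd_mul_left ?_
      have : (2 : ℤ) * (k - 1) = (l - 2) - B := by omega
      rw [this]
      exact dvd_sub hlN hB
    have hld : (N : ℤ) ∣ (l - k - 1) := by
      refine hcop.symm.dvd_of_dvd_mul_left ?_
      have : (2 : ℤ) * (l - k - 1) = (l - 2) + B := by omega
      rw [this]
      exact dvd_add hlN hB
    set M : Matrix (Fin 2) (Fin 2) ℤ := !![k, -C; A, l - k] with hM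
    have e00 : M 0 0 = k := rfl
    have e01 : M 0 1 = -C := rfl
    have e10 : M 1 0 = A := rfl
    have e11 : M 1 1 = l - k := rfl
    refine ⟨M, ⟨?_, ?_, ?_, ?_, ?_⟩, ?_⟩
    · rw [Matrix.det_fin_two, e00, e01, e10, e11]
      have hB' : B = l - 2 * k := by omega
      subst hB'
      have h4 : 4 * (k * (l - k) - -C * A) = 4 * 1 := by linear_combination -hdisc
      exact mul_left_cancel₀ (by norm_num) h4
    · rw [e00]; exact hkd
    · rw [e11]; exact hld
    · rw [e10]; exact hA
    · rw [Matrix.trace_fin_two, e00, e11]; ring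
    · simp only [e00, e01, e10, e11, Prod.mk.injEq]
      exact ⟨trivial, by omega, by ring⟩
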